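/- Let G = (V,E) be a finite graph. Define the structure 𝒜 with domain V ∪ E, unary relations N = V and P = E, and binary relation I = {(a,e) : a ∈ V, e ∈ E, a is an endpoint of e}. Let φ(x) := ∀y ( N(x) ∧ (¬P(y) ∨ ¬I(x,y) ∨ =(y,x)) ) be the dependence logic formula with one free variable x and one universal quantifier. Then for every k: there is a team T over {x} in 𝒜 with |T| = k and 𝒜,T ⊨ φ if and only if G has an independent set of size k. -/
import Mathlib


/-- First-order terms built from variables and function symbols. -/
inductive Term (F V : Type) (arF : F → ℕ) : Type where
  | var : V → Term F V arF
  | func : (f : F) → (Fin (arF f) → Term F V arF) → Term F V arF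

/-- Evaluation of a term under an assignment `s`. -/
def Term.eval {F V A : Type} {arF : F → ℕ} (fI : (f : F) → (Fin (arF f) → A) → A)
    (s : V → A) : Term F V arF → A
  | .var x => s x
  | .func f ts => fI f fun i => (ts i).eval fI s

/-- Variables occurring in a term. -/
def Term.vars {F V : Type} {arF : F → ℕ} : Term F V arF → Set V
  | .var x => {x}
  | .func _ ts => ⋃ i, (ts i).vars

/-- Formulas of first-order logic in negation normal form, extended by
dependence atoms `dep`, inclusion atoms `inc`, and independence atoms `indep`. -/
inductive TForm (R F V : Type) (arR : R → ℕ) (arF : F → ℕ) : Type where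
  | eq  : Term F V arF → Term F V arF → TForm R F V arR arF
  | neq : Term F V arF → Term F V arF → TForm R F V arR arF
  | rel  : (r : R) → (Fin (arR r) → Term F V arF) → TForm R F V arR arF
  | nrel : (r : R) → (Fin (arR r) → Term F V arF) → TForm R F V arR arF
  | dep : List (Term F V arF) → List (Term F V arF) → TForm R F V arR arF
  | inc : List (Term F V arF) → List (Term F V arF) → TForm R F V arR arF
  | indep : List (Term F V arF) → List (Term F V arF) → List (Term F V arF) →
      TForm R F V arR arF
  | and : TForm R F V arR arF → TForm R F V arR arF → TForm R F V arR arF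
  | or  : TForm R F V arR arF → TForm R F V arR arF → TForm R F V arR arF
  | ex  : V → TForm R F V arR arF → TForm R F V arR arF
  | all : V → TForm R F V arR arF → TForm R F V arR arF

/-- A first-order structure: interpretations of relation and function symbols. -/
structure Str (R F : Type) (arR : R → ℕ) (arF : F → ℕ) (A : Type) where
  relI : (r : R) → (Fin (arR r) → A) → Prop
  funI : (f : F) → (Fin (arF f) → A) → A

/-- Evaluation of a tuple (list) of terms. -/
def evalT {R F V A : Type} {arR : R → ℕ} {arF : F → ℕ} (M : Str R F arR arF A)
    (s : V → A) (ts : List (Term F V arF)) : List A :=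
  ts.map (Term.eval M.funI s)

/-- Team semantics.  A team is a set of assignments `V → A`.  Disjunction splits
the team, `∃x` uses a supplementing function into nonempty sets of values, and
`∀x` uses the full supplemented team. -/
def TSat {R F V A : Type} {arR : R → ℕ} {arF : F → ℕ} [DecidableEq V]
    (M : Str R F arR arF A) : TForm R F V arR arF → Set (V → A) → Prop
  | .eq t u, T => ∀ s ∈ T, t.eval M.funI s = u.eval M.funI s
  | .neq t u, T => ∀ s ∈ T, t.eval M.funI s ≠ u.eval M.funI s
  | .rel r ts, T => ∀ s ∈ T, M.relI r fun i => (ts i).eval M.funI s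
  | .nrel r ts, T => ∀ s ∈ T, ¬ M.relI r fun i => (ts i).eval M.funI s
  | .dep ts us, T => ∀ s₁ ∈ T, ∀ s₂ ∈ T,
      evalT M s₁ ts = evalT M s₂ ts → evalT M s₁ us = evalT M s₂ us
  | .inc ts us, T => ∀ s₁ ∈ T, ∃ s₂ ∈ T, evalT M s₁ ts = evalT M s₂ us
  | .indep ts us vs, T => ∀ s₁ ∈ T, ∀ s₂ ∈ T, evalT M s₁ vs = evalT M s₂ vs →
      ∃ s₃ ∈ T, evalT M s₃ vs = evalT M s₁ vs ∧ evalT M s₃ ts = evalT M s₁ ts ∧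
        evalT M s₃ us = evalT M s₂ us
  | .and φ ψ, T => TSat M φ T ∧ TSat M ψ T
  | .or φ ψ, T => ∃ T₁ T₂ : Set (V → A), T₁ ∪ T₂ = T ∧ TSat M φ T₁ ∧ TSat M ψ T₂
  | .ex x φ, T => ∃ f : (V → A) → Set A, (∀ s ∈ T, (f s).Nonempty) ∧
      TSat M φ {s' | ∃ s ∈ T, ∃ a ∈ f s, s' = Function.update s x a}
  | .all x φ, T => TSat M φ {s' | ∃ s ∈ T, ∃ a : A, s' = Function.update s x a}

/-- Classical Tarski semantics (the value on team atoms is irrelevant and set to `True`). -/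
def Sat {R F V A : Type} {arR : R → ℕ} {arF : F → ℕ} [DecidableEq V]
    (M : Str R F arR arF A) : (V → A) → TForm R F V arR arF → Prop
  | s, .eq t u => t.eval M.funI s = u.eval M.funI s
  | s, .neq t u => t.eval M.funI s ≠ u.eval M.funI s
  | s, .rel r ts => M.relI r fun i => (ts i).eval M.funI s
  | s, .nrel r ts => ¬ M.relI r fun i => (ts i).eval M.funI s
  | _, .dep _ _ => True
  | _, .inc _ _ => True
  | _, .indep _ _ _ => True
  | s, .and φ ψ => Sat M s φ ∧ Sat M s ψ
  | s, .or φ ψ => Sat M s φ ∨ Sat M s ψ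
  | s, .ex x φ => ∃ a : A, Sat M (Function.update s x a) φ
  | s, .all x φ => ∀ a : A, Sat M (Function.update s x a) φ

/-- A pure first-order formula: no dependence, inclusion, or independence atoms. -/
def TForm.IsFO {R F V : Type} {arR : R → ℕ} {arF : F → ℕ} :
    TForm R F V arR arF → Prop
  | .dep _ _ => False
  | .inc _ _ => False
  | .indep _ _ _ => False
  | .and φ ψ => φ.IsFO ∧ ψ.IsFO
  | .or φ ψ => φ.IsFO ∧ ψ.IsFO
  | .ex _ φ => φ.IsFO
  | .all _ φ => φ.IsFO
  | _ => True

/-- A dependence logic formula: no inclusion or independence atoms. -/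
def TForm.IsDep {R F V : Type} {arR : R → ℕ} {arF : F → ℕ} :
    TForm R F V arR arF → Prop
  | .inc _ _ => False
  | .indep _ _ _ => False
  | .and φ ψ => φ.IsDep ∧ ψ.IsDep
  | .or φ ψ => φ.IsDep ∧ ψ.IsDep
  | .ex _ φ => φ.IsDep
  | .all _ φ => φ.IsDep
  | _ => True

/-- An inclusion logic formula: no dependence or independence atoms. -/
def TForm.IsInc {R F V : Type} {arR : R → ℕ} {arF : F → ℕ} :
    TForm R F V arR arF → Prop
  | .dep _ _ => False
  | .indep _ _ _ => False
  | .and φ ψ => φ.IsInc ∧ ψ.IsInc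
  | .or φ ψ => φ.IsInc ∧ ψ.IsInc
  | .ex _ φ => φ.IsInc
  | .all _ φ => φ.IsInc
  | _ => True

/-- An independence logic formula: no dependence or inclusion atoms. -/
def TForm.IsInd {R F V : Type} {arR : R → ℕ} {arF : F → ℕ} :
    TForm R F V arR arF → Prop
  | .dep _ _ => False
  | .inc _ _ => False
  | .and φ ψ => φ.IsInd ∧ ψ.IsInd
  | .or φ ψ => φ.IsInd ∧ ψ.IsInd
  | .ex _ φ => φ.IsInd
  | .all _ φ => φ.IsInd
  | _ => True

/-- Variables of a list of terms. -/
def varsL {F V : Type} {arF : F → ℕ} (ts : List (Term F V arF)) : Set V :=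
  ⋃ t ∈ ts, Term.vars t

/-- Free variables of a formula. -/
def TForm.fr {R F V : Type} {arR : R → ℕ} {arF : F → ℕ} :
    TForm R F V arR arF → Set V
  | .eq t u => t.vars ∪ u.vars
  | .neq t u => t.vars ∪ u.vars
  | .rel _ ts => ⋃ i, (ts i).vars
  | .nrel _ ts => ⋃ i, (ts i).vars
  | .dep ts us => varsL ts ∪ varsL us
  | .inc ts us => varsL ts ∪ varsL us
  | .indep ts us vs => varsL ts ∪ varsL us ∪ varsL vs
  | .and φ ψ => φ.fr ∪ ψ.fr
  | .or φ ψ => φ.fr ∪ ψ.fr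
  | .ex x φ => φ.fr \ {x}
  | .all x φ => φ.fr \ {x}

open Classical in
/-- The restriction `T↾X` of a team to a set of variables, realized by setting
all variables outside `X` to the default value. -/
noncomputable def restrictTeam {V A : Type} [Inhabited A] (X : Set V)
    (T : Set (V → A)) : Set (V → A) :=
  (fun s v => if v ∈ X then s v else default) '' T

/-- The relation symbols N (vertices), P (edges), I (incidence). -/
inductive GSym : Type where
  | N | P | I
deriving DecidableEq

/-- Arities: N and P are unary, I is binary. -/
def GSym.ar : GSym → ℕ
  | .N => 1
  | .P => 1
  | .I => 2

/-- The structure `𝒜` with domain `V ∪ E`, `N = V`, `P = E` and incidence `I`. -/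
def indepStr {Vv : Type} (G : SimpleGraph Vv) :
    Str GSym Empty GSym.ar (fun e => e.elim) (Vv ⊕ G.edgeSet) :=
  ⟨fun r => match r with
    | .N => fun (v : Fin 1 → (Vv ⊕ G.edgeSet)) => ∃ a : Vv, v 0 = Sum.inl a
    | .P => fun (v : Fin 1 → (Vv ⊕ G.edgeSet)) => ∃ e : G.edgeSet, v 0 = Sum.inr e
    | .I => fun (v : Fin 2 → (Vv ⊕ G.edgeSet)) => ∃ (a : Vv) (e : G.edgeSet),
        v 0 = Sum.inl a ∧ v 1 = Sum.inr e ∧ a ∈ (e : Sym2 Vv),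
   fun e => e.elim⟩

/-- The dependence logic formula `φ(x) := ∀y (N(x) ∧ (¬P(y) ∨ ¬I(x,y) ∨ =(y,x)))`
(variables `x = 0`, `y = 1`). -/
def indepForm {Vv : Type} (G : SimpleGraph Vv) :
    TForm GSym Empty (Fin 2) GSym.ar (fun e => e.elim) :=
  .all 1 (.and (.rel .N ![.var 0])
    (.or (.nrel .P ![.var 1])
      (.or (.nrel .I ![.var 0, .var 1]) (.dep [.var 1] [.var 0]))))

lemma indep_back {Vv : Type} [DecidableEq Vv] (G : SimpleGraph Vv) (S : Finset Vv)
    (hind : ∀ u ∈ S, ∀ v ∈ S, ¬ G.Adj u v)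
    (T' : Set (Fin 2 → Vv ⊕ G.edgeSet))
    (hT' : ∀ s' ∈ T', ∃ u ∈ S, s' 0 = Sum.inl u) :
    ∃ T₁ T₂ : Set (Fin 2 → Vv ⊕ G.edgeSet), T₁ ∪ T₂ = T' ∧
      (∀ s ∈ T₁, ¬∃ e : G.edgeSet, s 1 = Sum.inr e) ∧
      ∃ T₃ T₄ : Set (Fin 2 → Vv ⊕ G.edgeSet), T₃ ∪ T₄ = T₂ ∧
        (∀ s ∈ T₃, ¬∃ (a : Vv) (e : G.edgeSet),
          s 0 = Sum.inl a ∧ s 1 = Sum.inr e ∧ a ∈ (e : Sym2 Vv)) ∧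
        ∀ s₁ ∈ T₄, ∀ s₂ ∈ T₄, [s₁ 1] = [s₂ 1] → [s₁ 0] = [s₂ 0] := by
  classical
  refine ⟨{s ∈ T' | ¬∃ e : G.edgeSet, s 1 = Sum.inr e},
    {s ∈ T' | ∃ e : G.edgeSet, s 1 = Sum.inr e}, ?_, fun s hs => hs.2,
    {s ∈ T' | (∃ e : G.edgeSet, s 1 = Sum.inr e) ∧ ¬∃ (a : Vv) (e : G.edgeSet),
      s 0 = Sum.inl a ∧ s 1 = Sum.inr e ∧ a ∈ (e : Sym2 Vv)},
    {s ∈ T' | (∃ e : G.edgeSet, s 1 = Sum.inr e) ∧ ∃ (a : Vv) (e : G.edgeSet),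
      s 0 = Sum.inl a ∧ s 1 = Sum.inr e ∧ a ∈ (e : Sym2 Vv)}, ?_,
    fun s hs => hs.2.2, ?_⟩
  · ext s; simp only [Set.mem_union, Set.mem_setOf_eq]; tauto
  · ext s; simp only [Set.mem_union, Set.mem_setOf_eq]; tauto
  · rintro s₁ ⟨hs₁, -, a₁, e₁, h₁0, h₁1, h₁e⟩ s₂ ⟨hs₂, -, a₂, e₂, h₂0, h₂1, h₂e⟩ hy
    simp only [List.cons.injEq, and_true] at hy ⊢
    obtain ⟨u, huS, hu0⟩ := hT' s₁ hs₁
    obtain ⟨v, hvS, hv0⟩ := hT' s₂ hs₂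
    rw [hu0] at h₁0; rw [hv0] at h₂0
    obtain rfl : u = a₁ := Sum.inl.inj h₁0
    obtain rfl : v = a₂ := Sum.inl.inj h₂0
    have hee : e₁ = e₂ := by
      rw [h₁1, h₂1] at hy; exact Sum.inr.inj hy
    subst hee
    have huv : u = v := by
      by_contra hne
      have hE : (e₁ : Sym2 Vv) = s(u, v) := (Sym2.mem_and_mem_iff hne).mp ⟨h₁e, h₂e⟩
      exact hind u huS v hvS (G.mem_edgeSet.mp (hE ▸ e₁.2))
    rw [hu0, hv0, huv]

/-- There is a team `T` over `{x}` of size `k` satisfying `φ` in `𝒜`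
iff `G` has an independent set of size `k`.  Teams with domain `{x}` are
represented by teams of constant assignments. -/
theorem independentSet_iff_team {Vv : Type} [Fintype Vv] [DecidableEq Vv]
    (G : SimpleGraph Vv) (k : ℕ) :
    (∃ T : Finset (Fin 2 → (Vv ⊕ G.edgeSet)),
        (∀ s ∈ T, ∀ v : Fin 2, s v = s 0) ∧ T.card = k ∧
        TSat (indepStr G) (indepForm G) (↑T : Set (Fin 2 → (Vv ⊕ G.edgeSet)))) ↔
    (∃ S : Finset Vv, S.card = k ∧ ∀ u ∈ S, ∀ v ∈ S, ¬ G.Adj u v) := by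
  classical
  constructor
  · rintro ⟨T, hconst, hcard, hsat⟩
    simp only [indepForm, TSat, indepStr, evalT, Term.eval, List.map, Matrix.cons_val_zero,
      Matrix.cons_val_one, Matrix.head_cons] at hsat
    obtain ⟨hN, T₁, T₂, hsp1, hP, T₃, T₄, hsp2, hI, hdep⟩ := hsat
    have hvtx : ∀ s ∈ T, ∃ u : Vv, s 0 = Sum.inl u := by
      intro s hs
      exact hN s ⟨s, hs, s 1, (Function.update_eq_self _ _).symm⟩
    refine ⟨Finset.univ.filter (fun u => (fun _ => Sum.inl u) ∈ T), ?_, ?_⟩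
    · rw [← hcard]
      apply Finset.card_bij (fun u _ => (fun _ => Sum.inl u))
      · intro u hu; exact (Finset.mem_filter.mp hu).2
      · intro u _ v _ h; exact Sum.inl.inj (congrFun h 0)
      · intro s hs
        obtain ⟨u, hu⟩ := hvtx s hs
        have hse : s = fun _ => Sum.inl u := by
          funext v; rw [hconst s hs v, hu]
        exact ⟨u, Finset.mem_filter.mpr ⟨Finset.mem_univ _, hse ▸ hs⟩, hse.symm⟩
    · intro u hu v hv hadj
      have hu' : (fun _ => Sum.inl u : Fin 2 → Vv ⊕ G.edgeSet) ∈ T :=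
        (Finset.mem_filter.mp hu).2
      have hv' : (fun _ => Sum.inl v : Fin 2 → Vv ⊕ G.edgeSet) ∈ T :=
        (Finset.mem_filter.mp hv).2
      set e : G.edgeSet := ⟨s(u, v), hadj⟩ with he
      have key : ∀ w : Vv, (fun _ => Sum.inl w : Fin 2 → Vv ⊕ G.edgeSet) ∈ T →
          w ∈ (e : Sym2 Vv) →
          (Function.update (fun _ => Sum.inl w : Fin 2 → Vv ⊕ G.edgeSet) 1 (Sum.inr e)) ∈ T₄ := by
        intro w hw hwe
        have hmem : Function.update (fun _ => Sum.inl w : Fin 2 → Vv ⊕ G.edgeSet) 1 (Sum.inr e)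
            ∈ {s' | ∃ s ∈ (↑T : Set (Fin 2 → Vv ⊕ G.edgeSet)), ∃ a, s' = Function.update s 1 a} :=
          ⟨_, hw, Sum.inr e, rfl⟩
        rw [← hsp1] at hmem
        rcases hmem with h1 | h2
        · exact absurd ⟨e, by simp⟩ (hP _ h1)
        rw [← hsp2] at h2
        rcases h2 with h3 | h4
        · refine absurd ⟨w, e, ?_, by simp, hwe⟩ (hI _ h3)
          simp [Function.update_of_ne (show (0 : Fin 2) ≠ 1 by decide)]
        · exact h4
      have h1 := key u hu' (by rw [he]; exact Sym2.mem_mk_left u v)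
      have h2 := key v hv' (by rw [he]; exact Sym2.mem_mk_right u v)
      have key2 := hdep _ h1 _ h2 (by simp)
      simp only [List.cons.injEq, and_true,
        Function.update_of_ne (show (0 : Fin 2) ≠ 1 by decide)] at key2
      exact G.irrefl ((Sum.inl.inj key2) ▸ hadj)
  · rintro ⟨S, hcard, hind⟩
    refine ⟨S.image (fun u => fun _ => Sum.inl u), ?_, ?_, ?_⟩
    · intro s hs v
      obtain ⟨u, -, rfl⟩ := Finset.mem_image.mp hs; rfl
    · rw [Finset.card_image_of_injective _ (fun a b h => Sum.inl.inj (congrFun h 0)), hcard]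
    · simp only [indepForm, TSat, indepStr, evalT, Term.eval, List.map, Matrix.cons_val_zero,
        Matrix.cons_val_one, Matrix.head_cons]
      have hT' : ∀ s' ∈ {s' | ∃ s ∈ (↑(S.image (fun u => (fun _ => Sum.inl u : Fin 2 → Vv ⊕ G.edgeSet)))
            : Set (Fin 2 → Vv ⊕ G.edgeSet)), ∃ a, s' = Function.update s 1 a},
          ∃ u ∈ S, s' 0 = Sum.inl u := by
        rintro s' ⟨s, hs, a, rfl⟩
        obtain ⟨u, huS, rfl⟩ := Finset.mem_image.mp hs
        exact ⟨u, huS, by simp [Function.update_of_ne (show (0 : Fin 2) ≠ 1 by decide)]⟩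
      exact ⟨fun s hs => (hT' s hs).imp fun u h => h.2,
        indep_back G S hind _ hT'⟩
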